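/- Let $R$ be a commutative Noetherian $\mathbb{Z}$-graded ring whose degree-zero component is a field $F$ and which is infinite-dimensional as an $F$-vector space. Then at least one minimal prime ideal of $R$ has a nonzero homogeneous component of nonzero degree strictly contained in the corresponding component of $R$ (equivalently, not every minimal prime agrees with $R$ in all nonzero degrees). -/

import Mathlib

/-!
STATEMENT 1: Let `R` be a commutative Noetherian `ℤ`-graded ring whose degree-zero component
is a field `F` and which is infinite-dimensional as an `F`-vector space.  Then at least one
minimal prime of `R` differs from `R` in at least one nonzero homogeneous component:
there is a minimal prime `P`, a degree `n ≠ 0` and a homogeneous element of degree `n`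
not lying in `P`.
-/
theorem minimal_prime_differs_in_nonzero_degree
    (F : Type*) [Field F] (R : Type*) [CommRing R] [Algebra F R] [IsNoetherianRing R]
    (𝒜 : ℤ → Submodule F R) [GradedAlgebra 𝒜]
    -- the degree-zero component is exactly `F`
    (h0 : 𝒜 0 = Submodule.span F {(1 : R)})
    -- `R` is infinite-dimensional over `F`
    (hinf : ¬ Module.Finite F R) :
    ∃ P ∈ minimalPrimes R, ∃ n : ℤ, n ≠ 0 ∧ ∃ x ∈ 𝒜 n, x ∉ P := by
  by_contra hcon
  push_neg at hcon
  set J : Ideal R := nilradical R with hJ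
  -- every homogeneous element of nonzero degree is nilpotent
  have hnil : ∀ (n : ℤ), n ≠ 0 → ∀ x ∈ 𝒜 n, x ∈ J := by
    intro n hn x hx
    rw [hJ, nilradical_eq_sInf]
    refine Submodule.mem_sInf.2 fun P hP => ?_
    haveI : Ideal.IsPrime P := hP
    obtain ⟨Q, hQ, hQP⟩ := Ideal.exists_minimalPrimes_le (I := ⊥) (J := P) bot_le
    exact hQP (hcon Q hQ n hn x hx)
  -- every element of R is a scalar plus a nilpotent
  have hdecomp : ∀ r : R, ∃ c : F, r - c • 1 ∈ J := by
    intro r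
    classical
    obtain ⟨y, hy, hyz⟩ : ∃ y : R, y ∈ 𝒜 0 ∧ y = (DirectSum.decompose 𝒜 r 0 : R) :=
      ⟨_, SetLike.coe_mem _, rfl⟩
    rw [h0, Submodule.mem_span_singleton] at hy
    obtain ⟨c, hc⟩ := hy
    rw [hyz] at hc
    refine ⟨c, ?_⟩
    have hsum := DirectSum.sum_support_decompose 𝒜 r
    have hr : r - c • 1 =
        ∑ i ∈ (DirectSum.decompose 𝒜 r).support.erase 0,
          (DirectSum.decompose 𝒜 r i : R) := by
      by_cases h0mem : (0 : ℤ) ∈ (DirectSum.decompose 𝒜 r).support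
      · rw [Finset.sum_erase_eq_sub h0mem, hsum, hc]
      · rw [Finset.erase_eq_of_notMem h0mem, hsum]
        have : (DirectSum.decompose 𝒜 r 0 : R) = 0 := by
          simpa using DFinsupp.notMem_support_iff.1 h0mem
        rw [← hc] at this
        rw [this, sub_zero]
    rw [hr]
    exact Ideal.sum_mem _ fun i hi =>
      hnil i (Finset.ne_of_mem_erase hi) _ (SetLike.coe_mem _)
  -- step lemma: finiteness descends along the nilradical filtration
  have step : ∀ i : ℕ, (Submodule.restrictScalars F ((J ^ (i + 1) : Ideal R) : Submodule R R)).FG →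
      (Submodule.restrictScalars F ((J ^ i : Ideal R) : Submodule R R)).FG := by
    intro i hFG
    obtain ⟨s, hs⟩ := IsNoetherian.noetherian (J ^ i : Ideal R)
    have key : Submodule.restrictScalars F ((J ^ i : Ideal R) : Submodule R R) =
        Submodule.span F (s : Set R) ⊔
          Submodule.restrictScalars F ((J ^ (i + 1) : Ideal R) : Submodule R R) := by
      apply le_antisymm
      · intro x hx
        have hx' : x ∈ Submodule.span R (s : Set R) := by
          rw [hs]; exact hx
        rw [Submodule.mem_span_finset] at hx'
        obtain ⟨f, -, hf⟩ := hx'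
        rw [← hf]
        refine Submodule.sum_mem _ fun t ht => ?_
        obtain ⟨c, hc⟩ := hdecomp (f t)
        have htJ : t ∈ (J ^ i : Ideal R) := by
          rw [← hs]; exact Submodule.subset_span ht
        have h1 : (c • (1 : R)) * t ∈ Submodule.span F (s : Set R) := by
          rw [smul_mul_assoc, one_mul]
          exact Submodule.smul_mem _ _ (Submodule.subset_span ht)
        have h2 : (f t - c • 1) * t ∈ (J ^ (i + 1) : Ideal R) := by
          rw [pow_succ']
          exact Ideal.mul_mem_mul hc htJ
        have : f t • t = (c • (1 : R)) * t + (f t - c • 1) * t := by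
          rw [smul_eq_mul]; ring
        rw [this]
        exact Submodule.add_mem _ (Submodule.mem_sup_left h1) (Submodule.mem_sup_right h2)
      · refine sup_le ?_ ?_
        · rw [Submodule.span_le]
          intro t ht
          have : t ∈ (J ^ i : Ideal R) := by rw [← hs]; exact Submodule.subset_span ht
          exact this
        · intro x hx
          exact Ideal.pow_le_pow_right (Nat.le_succ i) hx
    rw [key]
    exact Submodule.FG.sup (Submodule.fg_span (Finset.finite_toSet s)) hFG
  -- the nilradical is nilpotent
  obtain ⟨k, hk⟩ := IsNoetherianRing.isNilpotent_nilradical R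
  -- downward induction
  have main : ∀ j : ℕ, (Submodule.restrictScalars F ((J ^ (k - j) : Ideal R) : Submodule R R)).FG := by
    intro j
    induction j with
    | zero =>
        simp only [Nat.sub_zero, hJ, hk]
        exact ⟨∅, by simp⟩
    | succ j ih =>
        rcases le_or_gt k (j + 1) with h | h
        · rcases le_or_gt k j with h' | h'
          · have : k - (j + 1) = k - j := by omega
            rwa [this]
          · have h1 : k - (j + 1) = 0 := by omega
            have h2 : k - j = 1 := by omega
            rw [h1]
            exact step 0 (by rwa [h2] at ih)
        · have : k - j = (k - (j + 1)) + 1 := by omega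
          exact step _ (by rwa [this] at ih)
  have := main k
  rw [Nat.sub_self, pow_zero] at this
  apply hinf
  rw [Module.finite_def]
  simpa using this
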